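/- Let I ⊂ K[x_1,...,x_n] be a squarefree strongly stable ideal generated in degree d, with generator counts m_{d+j}(I) = |{u ∈ G(I) : m(u) = d+j}| and μ_{d+j}(I) the number of squarefree monomials of degree d+j in I that are minimal generators of I_{[d+j]}. Then the polynomial identity ∑_{j=0}^{n-d} μ_{d+j}(I) t^j = ∑_{j=0}^{n-d} m_{d+j}(I)(1+t)^{n-d-j} holds in ℤ[t]. -/

import Mathlib

open Polynomial Finset

def mins (T : Finset ℕ) (d : ℕ) : Finset ℕ := ((T.sort (·≤·)).take d).toFinset

lemma mins_subset (T : Finset ℕ) (d : ℕ) : mins T d ⊆ T := by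
  intro x hx
  rw [mins, List.mem_toFinset] at hx
  have := List.mem_of_mem_take hx
  rwa [Finset.mem_sort] at this

lemma card_mins (T : Finset ℕ) (d : ℕ) (h : d ≤ T.card) : (mins T d).card = d := by
  have h1 := Finset.sort_nodup (α := ℕ) T (· ≤ ·)
  have h2 := h1.sublist (List.take_sublist d _)
  rw [mins, List.toFinset_card_of_nodup h2, List.length_take, Finset.length_sort (α := ℕ) (r := (· ≤ ·))]
  omega

lemma mins_lt (T : Finset ℕ) (d : ℕ) {x y : ℕ} (hx : x ∈ mins T d) (hy : y ∈ T)
    (hy2 : y ∉ mins T d) : x < y := by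
  have hs := T.sortedLT_sort.pairwise
  rw [mins, List.mem_toFinset] at hx hy2
  rw [← Finset.mem_sort (·≤·)] at hy
  have hyd : y ∈ (T.sort (·≤·)).drop d := by
    have := (List.take_append_drop d (T.sort (·≤·))) ▸ hy
    rcases List.mem_append.1 this with h | h
    · exact absurd h hy2
    · exact h
  obtain ⟨i, hi, hix⟩ := List.getElem_of_mem hx
  obtain ⟨k, hk, hky⟩ := List.getElem_of_mem hyd
  rw [List.getElem_take] at hix
  rw [List.getElem_drop] at hky
  have hid : i < d := lt_of_lt_of_le hi (by simp [List.length_take])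
  subst hix hky
  exact List.pairwise_iff_getElem.1 hs _ _ _ _ (by omega)

lemma initial_unique {T g₁ g₂ : Finset ℕ} (h1 : g₁ ⊆ T) (h2 : g₂ ⊆ T)
    (hc : g₁.card = g₂.card)
    (hlt1 : ∀ x ∈ g₁, ∀ y ∈ T, y ∉ g₁ → x < y)
    (hlt2 : ∀ x ∈ g₂, ∀ y ∈ T, y ∉ g₂ → x < y) : g₁ = g₂ := by
  by_contra hne
  have hs1 : ¬ g₁ ⊆ g₂ ∨ ¬ g₂ ⊆ g₁ := by
    by_contra h
    push_neg at h
    exact hne (Finset.Subset.antisymm h.1 h.2)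
  have key : ∀ x ∈ g₁, ∀ y ∈ g₂, x ∉ g₂ → y ∉ g₁ → False := by
    intro x hx y hy hx2 hy1
    exact absurd (hlt1 x hx y (h2 hy) hy1) (not_lt.2 (le_of_lt (hlt2 y hy x (h1 hx) hx2)))
  rcases hs1 with h | h
  · obtain ⟨x, hx, hx2⟩ := Finset.not_subset.1 h
    have h2s : ¬ g₂ ⊆ g₁ := fun hs => hne ((Finset.eq_of_subset_of_card_le hs hc.le).symm)
    obtain ⟨y, hy, hy1⟩ := Finset.not_subset.1 h2s
    exact key x hx y hy hx2 hy1
  · obtain ⟨y, hy, hy1⟩ := Finset.not_subset.1 h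
    have h1s : ¬ g₁ ⊆ g₂ := fun hs => hne (Finset.eq_of_subset_of_card_le hs hc.ge)
    obtain ⟨x, hx, hx2⟩ := Finset.not_subset.1 h1s
    exact key x hx y hy hx2 hy1

lemma mins_mem_aux (n d : ℕ) (G : Finset (Finset ℕ))
    (hsub : ∀ g ∈ G, g ⊆ Finset.Icc 1 n)
    (hcard : ∀ g ∈ G, g.card = d)
    (hstable : ∀ g ∈ G, ∀ i ∈ g, ∀ j, 1 ≤ j → j < i → j ∉ g →
      insert j (g.erase i) ∈ G)
    (T : Finset ℕ) (hT : T ⊆ Finset.Icc 1 n) :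
    ∀ k, ∀ g ∈ G, g ⊆ T → (g \ mins T d).card ≤ k → mins T d ∈ G := by
  intro k
  induction k with
  | zero =>
    intro g hg hgT hk
    have hdT : d ≤ T.card := (hcard g hg) ▸ Finset.card_le_card hgT
    have hsd : g ⊆ mins T d := by
      rw [← Finset.sdiff_eq_empty_iff_subset]
      exact Finset.card_eq_zero.1 (Nat.le_zero.1 hk)
    have : g = mins T d :=
      Finset.eq_of_subset_of_card_le hsd (by rw [card_mins T d hdT, hcard g hg])
    exact this ▸ hg
  | succ k ih =>
    intro g hg hgT hk
    have hdT : d ≤ T.card := (hcard g hg) ▸ Finset.card_le_card hgT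
    by_cases hgm : g = mins T d
    · exact hgm ▸ hg
    · have hcards : g.card = (mins T d).card := by rw [card_mins T d hdT, hcard g hg]
      have hns : ¬ g ⊆ mins T d := fun hs => hgm (Finset.eq_of_subset_of_card_le hs hcards.ge)
      obtain ⟨i, hig, him⟩ := Finset.not_subset.1 hns
      have hns2 : ¬ mins T d ⊆ g := fun hs => hgm ((Finset.eq_of_subset_of_card_le hs hcards.le).symm)
      obtain ⟨j, hjm, hjg⟩ := Finset.not_subset.1 hns2
      have hji : j < i := mins_lt T d hjm (hgT hig) him
      have hj1 : 1 ≤ j := (Finset.mem_Icc.1 (hT (mins_subset T d hjm))).1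
      have hg' : insert j (g.erase i) ∈ G := hstable g hg i hig j hj1 hji hjg
      have hg'T : insert j (g.erase i) ⊆ T := by
        intro x hx
        rcases Finset.mem_insert.1 hx with rfl | hx
        · exact mins_subset T d hjm
        · exact hgT (Finset.mem_of_mem_erase hx)
      apply ih _ hg' hg'T
      have : insert j (g.erase i) \ mins T d = (g \ mins T d).erase i := by
        ext x
        simp only [Finset.mem_sdiff, Finset.mem_insert, Finset.mem_erase]
        constructor
        · rintro ⟨rfl | ⟨hxi, hxg⟩, hxm⟩
          · exact absurd hjm hxm
          · exact ⟨hxi, hxg, hxm⟩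
        · rintro ⟨hxi, hxg, hxm⟩
          exact ⟨Or.inr ⟨hxi, hxg⟩, hxm⟩
      rw [this]
      have hi : i ∈ g \ mins T d := Finset.mem_sdiff.2 ⟨hig, him⟩
      have := Finset.card_erase_of_mem hi
      omega

lemma sup_bounds (n d : ℕ) {g : Finset ℕ} (hsub : g ⊆ Finset.Icc 1 n)
    (hcard : g.card = d) (hd : 1 ≤ d) : d ≤ g.sup id ∧ g.sup id ≤ n := by
  constructor
  · have : g ⊆ Finset.Icc 1 (g.sup id) := by
      intro x hx
      exact Finset.mem_Icc.2 ⟨(Finset.mem_Icc.1 (hsub hx)).1, Finset.le_sup (f := id) hx⟩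
    have := Finset.card_le_card this
    rwa [hcard, Nat.card_Icc, Nat.add_sub_cancel] at this
  · exact Finset.sup_le fun x hx => (Finset.mem_Icc.1 (hsub hx)).2

lemma count_lemma (n d j : ℕ) (hd : 1 ≤ d) (G : Finset (Finset ℕ))
    (hsub : ∀ g ∈ G, g ⊆ Finset.Icc 1 n)
    (hcard : ∀ g ∈ G, g.card = d)
    (hstable : ∀ g ∈ G, ∀ i ∈ g, ∀ j, 1 ≤ j → j < i → j ∉ g →
      insert j (g.erase i) ∈ G) :
    (((Finset.Icc 1 n).powerset.filter
        (fun T => T.card = d + j ∧ ∃ g ∈ G, g ⊆ T)).card : ℕ)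
      = ∑ g ∈ G, (n - g.sup id).choose j := by
  -- key facts about members of the image sets
  have himg : ∀ g ∈ G, ∀ S ∈ (Finset.Ioc (g.sup id) n).powersetCard j,
      Disjoint g S ∧ g ∪ S ⊆ Finset.Icc 1 n ∧ (g ∪ S).card = d + j ∧
      (∀ x ∈ g, ∀ y ∈ (g ∪ S), y ∉ g → x < y) := by
    intro g hg S hS
    rw [Finset.mem_powersetCard] at hS
    obtain ⟨hS1, hS2⟩ := hS
    have hgx : ∀ x ∈ g, x ≤ g.sup id := fun x hx => Finset.le_sup (f := id) hx
    have hSx : ∀ y ∈ S, g.sup id < y ∧ y ≤ n := fun y hy => Finset.mem_Ioc.1 (hS1 hy)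
    have hdisj : Disjoint g S := by
      rw [Finset.disjoint_left]
      intro a hag haS
      exact absurd (hgx a hag) (not_le.2 (hSx a haS).1)
    refine ⟨hdisj, ?_, ?_, ?_⟩
    · intro x hx
      rcases Finset.mem_union.1 hx with h | h
      · exact hsub g hg h
      · have := hSx x h
        exact Finset.mem_Icc.2 ⟨by omega, this.2⟩
    · rw [Finset.card_union_of_disjoint hdisj, hcard g hg, hS2]
    · intro x hx y hy hyg
      rcases Finset.mem_union.1 hy with h | h
      · exact absurd h hyg
      · exact lt_of_le_of_lt (hgx x hx) (hSx y h).1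
  have hmain : ((Finset.Icc 1 n).powerset.filter
        (fun T => T.card = d + j ∧ ∃ g ∈ G, g ⊆ T))
      = G.biUnion (fun g => ((Finset.Ioc (g.sup id) n).powersetCard j).image (fun S => g ∪ S)) := by
    ext T
    simp only [Finset.mem_filter, Finset.mem_powerset, Finset.mem_biUnion, Finset.mem_image]
    constructor
    · rintro ⟨hT, hc, g₀, hg₀, hg₀T⟩
      have hdT : d ≤ T.card := by rw [hc]; omega
      have hM : mins T d ∈ G :=
        mins_mem_aux n d G hsub hcard hstable T hT _ g₀ hg₀ hg₀T le_rfl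
      refine ⟨mins T d, hM, T \ mins T d, ?_, ?_⟩
      · rw [Finset.mem_powersetCard]
        constructor
        · intro y hy
          have hyT := Finset.mem_sdiff.1 hy
          have hlt : (mins T d).sup id < y := by
            rw [Finset.sup_lt_iff]
            · intro b hb
              exact mins_lt T d hb hyT.1 hyT.2
            · have : 1 ≤ y := (Finset.mem_Icc.1 (hT hyT.1)).1
              rw [bot_eq_zero]
              omega
          exact Finset.mem_Ioc.2 ⟨hlt, (Finset.mem_Icc.1 (hT hyT.1)).2⟩
        · rw [Finset.card_sdiff_of_subset (mins_subset T d), card_mins T d hdT, hc]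
          omega
      · rw [Finset.union_sdiff_of_subset (mins_subset T d)]
    · rintro ⟨g, hg, S, hS, rfl⟩
      obtain ⟨hdisj, hsubU, hcU, _⟩ := himg g hg S hS
      exact ⟨hsubU, hcU, g, hg, Finset.subset_union_left⟩
  have hpd : ∀ g₁ ∈ G, ∀ g₂ ∈ G, g₁ ≠ g₂ →
      Disjoint (((Finset.Ioc (g₁.sup id) n).powersetCard j).image (fun S => g₁ ∪ S))
        (((Finset.Ioc (g₂.sup id) n).powersetCard j).image (fun S => g₂ ∪ S)) := by
    intro g₁ hg₁ g₂ hg₂ hne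
    simp only [Finset.disjoint_left, Finset.mem_image]
    rintro T ⟨S₁, hS₁, rfl⟩ ⟨S₂, hS₂, hEq⟩
    obtain ⟨hd1, hsub1, hc1, hlt1⟩ := himg g₁ hg₁ S₁ hS₁
    obtain ⟨hd2, hsub2, hc2, hlt2⟩ := himg g₂ hg₂ S₂ hS₂
    apply hne
    apply initial_unique (T := g₁ ∪ S₁) Finset.subset_union_left
      (hEq ▸ Finset.subset_union_left) (by rw [hcard g₁ hg₁, hcard g₂ hg₂]) hlt1
    intro x hx y hy hyg
    exact hlt2 x hx y (hEq ▸ hy) hyg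
  rw [hmain, Finset.card_biUnion hpd]
  refine Finset.sum_congr rfl ?_
  intro g hg
  rw [Finset.card_image_of_injOn, Finset.card_powersetCard, Nat.card_Ioc]
  intro S₁ hS₁ S₂ hS₂ hEq
  simp only [Finset.mem_coe] at hS₁ hS₂
  obtain ⟨hd1, -, -, -⟩ := himg g hg S₁ hS₁
  obtain ⟨hd2, -, -, -⟩ := himg g hg S₂ hS₂
  have h1 : (g ∪ S₁) \ g = S₁ := Finset.union_sdiff_cancel_left hd1
  have h2 : (g ∪ S₂) \ g = S₂ := Finset.union_sdiff_cancel_left hd2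
  rw [← h1, ← h2, show g ∪ S₁ = g ∪ S₂ from hEq]

lemma binom_sum (m N : ℕ) (h : m ≤ N) :
    ∑ j ∈ Finset.range (N + 1), Polynomial.C ((m.choose j : ℤ)) * (X : Polynomial ℤ) ^ j
      = (1 + (X : Polynomial ℤ)) ^ m := by
  rw [show (1 + (X : Polynomial ℤ)) = X + 1 from add_comm 1 X, add_pow]
  rw [← Finset.sum_subset (Finset.range_subset_range.2 (by omega : m + 1 ≤ N + 1))
    (fun k hk hk2 => by
      have hmk : m < k := by
        rw [Finset.mem_range] at hk2
        omega
      simp [Nat.choose_eq_zero_of_lt hmk])]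
  refine Finset.sum_congr rfl fun k _ => ?_
  rw [Polynomial.C_eq_natCast]
  ring

/-- The polynomial identity `∑_j μ_{d+j}(I) t^j = ∑_j m_{d+j}(I) (1+t)^{n-d-j}` for a
squarefree strongly stable ideal generated in degree `d`, in the combinatorial model
of squarefree monomial ideals (see the statement of the generators lemma). -/
theorem stmt12 (n d : ℕ) (hd : 1 ≤ d) (hdn : d ≤ n)
    (G : Finset (Finset ℕ)) (hG : G.Nonempty)
    (hsub : ∀ g ∈ G, g ⊆ Finset.Icc 1 n)
    (hcard : ∀ g ∈ G, g.card = d)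
    (hstable : ∀ g ∈ G, ∀ i ∈ g, ∀ j, 1 ≤ j → j < i → j ∉ g →
      insert j (g.erase i) ∈ G) :
    ∑ j ∈ Finset.range (n - d + 1),
        Polynomial.C ((((Finset.Icc 1 n).powerset.filter
            (fun T => T.card = d + j ∧ ∃ g ∈ G, g ⊆ T)).card : ℤ)) * (X : Polynomial ℤ) ^ j
      = ∑ j ∈ Finset.range (n - d + 1),
          Polynomial.C (((G.filter (fun g => g.sup id = d + j)).card : ℤ))
            * (1 + (X : Polynomial ℤ)) ^ (n - d - j) := by
  have hsupb : ∀ g ∈ G, d ≤ g.sup id ∧ g.sup id ≤ n :=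
    fun g hg => sup_bounds n d (hsub g hg) (hcard g hg) hd
  have hL : ∑ j ∈ Finset.range (n - d + 1),
        Polynomial.C ((((Finset.Icc 1 n).powerset.filter
            (fun T => T.card = d + j ∧ ∃ g ∈ G, g ⊆ T)).card : ℤ)) * (X : Polynomial ℤ) ^ j
      = ∑ g ∈ G, (1 + (X : Polynomial ℤ)) ^ (n - g.sup id) := by
    have step : ∀ j ∈ Finset.range (n - d + 1),
        Polynomial.C ((((Finset.Icc 1 n).powerset.filter
            (fun T => T.card = d + j ∧ ∃ g ∈ G, g ⊆ T)).card : ℤ)) * (X : Polynomial ℤ) ^ j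
          = ∑ g ∈ G, Polynomial.C (((n - g.sup id).choose j : ℤ)) * (X : Polynomial ℤ) ^ j := by
      intro j _
      rw [count_lemma n d j hd G hsub hcard hstable, Nat.cast_sum, map_sum, Finset.sum_mul]
    rw [Finset.sum_congr rfl step, Finset.sum_comm]
    refine Finset.sum_congr rfl fun g hg => ?_
    exact binom_sum _ _ (by have := hsupb g hg; omega)
  have hR : ∑ j ∈ Finset.range (n - d + 1),
          Polynomial.C (((G.filter (fun g => g.sup id = d + j)).card : ℤ))
            * (1 + (X : Polynomial ℤ)) ^ (n - d - j)
      = ∑ g ∈ G, (1 + (X : Polynomial ℤ)) ^ (n - g.sup id) := by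
    have step : ∀ j ∈ Finset.range (n - d + 1),
        Polynomial.C (((G.filter (fun g => g.sup id = d + j)).card : ℤ))
            * (1 + (X : Polynomial ℤ)) ^ (n - d - j)
          = ∑ g ∈ G.filter (fun g => g.sup id - d = j),
              (1 + (X : Polynomial ℤ)) ^ (n - g.sup id) := by
      intro j _
      have hfe : G.filter (fun g => g.sup id - d = j) = G.filter (fun g => g.sup id = d + j) := by
        apply Finset.filter_congr
        intro g hg
        have := hsupb g hg
        omega
      have h2 : ∑ g ∈ G.filter (fun g => g.sup id = d + j),
            (1 + (X : Polynomial ℤ)) ^ (n - g.sup id)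
          = ∑ _g ∈ G.filter (fun g => g.sup id = d + j),
            (1 + (X : Polynomial ℤ)) ^ (n - d - j) := by
        refine Finset.sum_congr rfl fun g hg => ?_
        simp only [Finset.mem_filter] at hg
        obtain ⟨-, hg2⟩ := hg
        rw [show n - g.sup id = n - d - j by omega]
      rw [hfe, h2, Finset.sum_const, nsmul_eq_mul, Polynomial.C_eq_natCast]
    rw [Finset.sum_congr rfl step]
    exact Finset.sum_fiberwise_of_maps_to
      (fun g hg => Finset.mem_range.2 (by have := hsupb g hg; omega)) _
  rw [hL, hR]
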